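/- For every integer n ≥ 1, the formal derivative of the n-th Fibonacci polynomial satisfies F(n)'(x) = Σ_{k=1}^{n−1} F(k)(x)·F(n−k)(x); that is, the derivative of the first point of the n-th row of the Hosoya triangle of Fibonacci polynomials equals the sum of all points of the (n−1)-th row. Moreover F(n)(0) = 1 if n is odd and F(n)(0) = 0 if n is even, so F(n) is the antiderivative of Σ_{k=1}^{n−1} F(k)·F(n−k) with constant of integration 1 when n is odd and 0 when n is even. -/

import Mathlib

open Polynomial Finset

/-- The Fibonacci polynomials: `F 0 = 0`, `F 1 = 1`, `F (n+2) = x * F (n+1) + F n`. -/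
noncomputable def fibPoly : ℕ → Polynomial ℤ
  | 0 => 0
  | 1 => 1
  | n + 2 => X * fibPoly (n + 1) + fibPoly n

lemma fibPoly_deriv : ∀ n : ℕ,
    derivative (fibPoly n) = ∑ k ∈ Finset.Icc 1 (n - 1), fibPoly k * fibPoly (n - k)
  | 0 => by simp [fibPoly]
  | 1 => by simp [fibPoly]
  | (n + 2) => by
    have ih1 := fibPoly_deriv (n + 1)
    have ih0 := fibPoly_deriv n
    rw [fibPoly, derivative_add, derivative_mul, derivative_X, one_mul, ih1, ih0]
    rw [show n + 2 - 1 = n + 1 from rfl, Finset.sum_Icc_succ_top (Nat.le_add_left 1 n)]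
    have hstep : ∀ k ∈ Finset.Icc 1 n, fibPoly k * fibPoly (n + 2 - k)
        = X * (fibPoly k * fibPoly (n + 1 - k)) + fibPoly k * fibPoly (n - k) := by
      intro k hk
      simp only [Finset.mem_Icc] at hk
      have h2 : n + 2 - k = (n - k) + 2 := by omega
      have h1 : n + 1 - k = (n - k) + 1 := by omega
      rw [h2, h1, fibPoly]
      ring
    rw [Finset.sum_congr rfl hstep, Finset.sum_add_distrib, ← Finset.mul_sum]
    have htail : ∑ k ∈ Finset.Icc 1 n, fibPoly k * fibPoly (n - k)
        = ∑ k ∈ Finset.Icc 1 (n - 1), fibPoly k * fibPoly (n - k) := by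
      rcases n with _ | m
      · simp
      · rw [show m + 1 - 1 = m from rfl, Finset.sum_Icc_succ_top (Nat.le_add_left 1 m)]
        simp [fibPoly]
    rw [htail, show n + 1 - 1 = n from rfl]
    simp [fibPoly, Nat.add_sub_cancel_left]
    ring

lemma fibPoly_eval0 : ∀ n : ℕ, (fibPoly n).eval 0 = if Odd n then 1 else 0
  | 0 => by simp [fibPoly]
  | 1 => by simp [fibPoly]
  | (n + 2) => by
    have ih := fibPoly_eval0 n
    rw [fibPoly]
    simp only [eval_add, eval_mul, eval_X, zero_mul, zero_add, ih]
    congr 1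
    simp [Nat.odd_add]

theorem fibPoly_derivative_eq_row_sum (n : ℕ) (hn : 1 ≤ n) :
    derivative (fibPoly n) = ∑ k ∈ Finset.Icc 1 (n - 1), fibPoly k * fibPoly (n - k) ∧
    (fibPoly n).eval 0 = if Odd n then 1 else 0 := by
  exact ⟨fibPoly_deriv n, fibPoly_eval0 n⟩
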